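/- Let U = E_{n1} + E_{(n−1)2} and ξ = E_{1n} + E_{2(n−1)} in sl(n, ℝ) with n ≥ 4. Then the commutator [U, ξ] = −E_{11} − E_{22} + E_{(n−1)(n−1)} + E_{nn}, and for a ≠ 0 the matrix ξ + a[U, ξ] does not have the same characteristic polynomial as ξ. -/

import Mathlib

open Matrix

set_option maxHeartbeats 1600000 in
/-- For `n ≥ 4`, with `U = Eₙ₁ + E₍ₙ₋₁₎₂` and `ξ = E₁ₙ + E₂₍ₙ₋₁₎`, the commutator is
`[U, ξ] = −E₁₁ − E₂₂ + E₍ₙ₋₁₎₍ₙ₋₁₎ + Eₙₙ`, and for `a ≠ 0` the matrix `ξ + a[U, ξ]` does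
not have the same characteristic polynomial as `ξ`. -/
theorem stmt_13 (n : ℕ) (hn : 4 ≤ n) (a : ℝ)
    (U ξ : Matrix (Fin n) (Fin n) ℝ)
    (hU : U = Matrix.single ⟨n - 1, by omega⟩ ⟨0, by omega⟩ 1
      + Matrix.single ⟨n - 2, by omega⟩ ⟨1, by omega⟩ 1)
    (hξ : ξ = Matrix.single ⟨0, by omega⟩ ⟨n - 1, by omega⟩ 1
      + Matrix.single ⟨1, by omega⟩ ⟨n - 2, by omega⟩ 1) :
    U * ξ - ξ * U = -(Matrix.single ⟨0, by omega⟩ ⟨0, by omega⟩ (1 : ℝ))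
        - Matrix.single ⟨1, by omega⟩ ⟨1, by omega⟩ 1
        + Matrix.single ⟨n - 2, by omega⟩ ⟨n - 2, by omega⟩ 1
        + Matrix.single ⟨n - 1, by omega⟩ ⟨n - 1, by omega⟩ 1 ∧
    (a ≠ 0 → (ξ + a • (U * ξ - ξ * U)).charpoly ≠ ξ.charpoly) := by
  have hpn : 0 < n := by omega
  set p : Fin n := ⟨0, by omega⟩ with hp
  set q : Fin n := ⟨1, by omega⟩ with hq
  set r : Fin n := ⟨n - 2, by omega⟩ with hr
  set s : Fin n := ⟨n - 1, by omega⟩ with hs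
  have hpq : p ≠ q := Fin.ne_of_val_ne (by simp [hp, hq])
  have hqp : q ≠ p := hpq.symm
  have hpr : p ≠ r := Fin.ne_of_val_ne (by simp [hp, hr]; omega)
  have hrp : r ≠ p := hpr.symm
  have hps : p ≠ s := Fin.ne_of_val_ne (by simp [hp, hs]; omega)
  have hsp : s ≠ p := hps.symm
  have hqr : q ≠ r := Fin.ne_of_val_ne (by simp [hq, hr]; omega)
  have hrq : r ≠ q := hqr.symm
  have hqs : q ≠ s := Fin.ne_of_val_ne (by simp [hq, hs]; omega)
  have hsq : s ≠ q := hqs.symm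
  have hrs : r ≠ s := Fin.ne_of_val_ne (by simp [hr, hs]; omega)
  have hsr : s ≠ r := hrs.symm
  have hcomm : U * ξ - ξ * U = -(Matrix.single p p (1 : ℝ))
      - Matrix.single q q 1 + Matrix.single r r 1 + Matrix.single s s 1 := by
    subst hU hξ
    rw [add_mul, add_mul, mul_add, mul_add, mul_add, mul_add]
    simp only [Matrix.single_mul_single_same, Matrix.single_mul_single_of_ne, one_mul,
      hpq, hqp, hsr, hrs, hsp, hps, hsq, hqs, hrq, hqr, hrp, hpr, ne_eq, not_false_eq_true]
    abel
  refine ⟨hcomm, fun ha hchar => ?_⟩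
  obtain ⟨M, hM⟩ : ∃ M, M = ξ + a • (U * ξ - ξ * U) := ⟨_, rfl⟩
  rw [← hM] at hchar
  -- ξ is nilpotent
  have hξ2 : ξ * ξ = 0 := by
    subst hξ
    rw [add_mul, mul_add, mul_add]
    simp only [Matrix.single_mul_single_of_ne, hsp, hsq, hrp, hrq, ne_eq,
      not_false_eq_true, add_zero, zero_add]
  have hξnil : IsNilpotent ξ := ⟨2, by rw [pow_two, hξ2]⟩
  have hξcp : ξ.charpoly = Polynomial.X ^ n := by
    have h1 := Matrix.isNilpotent_charpoly_sub_pow_of_isNilpotent hξnil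
    have h2 : ξ.charpoly - Polynomial.X ^ (Fintype.card (Fin n)) = 0 := h1.eq_zero
    rw [Fintype.card_fin] at h2
    exact sub_eq_zero.mp h2
  -- from equal charpoly, M is nilpotent
  have hMnil : IsNilpotent M := by
    refine ⟨n, ?_⟩
    have := M.aeval_self_charpoly
    rw [hchar, hξcp] at this
    simpa using this
  have hM2nil : IsNilpotent (M * M) := by
    obtain ⟨k, hk⟩ := hMnil
    exact ⟨k, by rw [← pow_two, ← pow_mul, mul_comm 2 k, pow_mul, hk]; simp⟩
  have htr : Matrix.trace (M * M) = 0 := by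
    have := Matrix.isNilpotent_trace_of_isNilpotent hM2nil
    exact this.eq_zero
  -- compute the trace explicitly
  have hMeq : M = Matrix.single p s 1 + Matrix.single q r 1
      + (Matrix.single p p (-a) + Matrix.single q q (-a)
        + Matrix.single r r a + Matrix.single s s a) := by
    rw [hM, hcomm, hξ]
    rw [smul_add, smul_add, smul_sub, smul_neg]
    simp only [Matrix.smul_single, smul_eq_mul, mul_one]
    have hneg : ∀ (i : Fin n) (c : ℝ), Matrix.single i i (-c) = -Matrix.single i i c :=
      fun i c => by rw [← neg_one_smul ℝ (Matrix.single i i c), Matrix.smul_single]; norm_num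
    rw [hneg, hneg]
    abel
  have htr4 : Matrix.trace (M * M) = 4 * a ^ 2 := by
    rw [hMeq]
    simp only [add_mul, mul_add]
    simp only [Matrix.single_mul_single_same, Matrix.single_mul_single_of_ne,
      hpq, hqp, hpr, hrp, hps, hsp, hqr, hrq, hqs, hsq, hrs, hsr, ne_eq, not_false_eq_true]
    simp only [Matrix.trace_add, Matrix.trace_zero, Matrix.trace_single_eq_same,
      Matrix.trace_single_eq_of_ne, hsp, hrq, hps, hqr, ne_eq, not_false_eq_true,
      add_zero, zero_add]
    ring
  rw [htr4] at htr
  have h4 : a ^ 2 = 0 := by linarith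
  exact ha (by simpa using pow_eq_zero_iff (n := 2) (by norm_num) |>.mp h4)
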